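/- Let σ = Σᵢ μᵢ|ηᵢ⟩⟨ηᵢ| be a full-rank density matrix with eigenvalues μᵢ > 0 and H a Hermitian operator. Define the Hermitian matrix h with entries h_{ij} = −(2√(μᵢμⱼ)/(μᵢ+μⱼ))·⟨ηⱼ|H|ηᵢ⟩. Then the operator norm satisfies ‖h‖ ≤ ‖H‖. -/

import Mathlib

open scoped BigOperators ComplexConjugate ComplexOrder Matrix

noncomputable section

/-- The rank-one projector `|ψ⟩⟨ψ|` as a matrix. -/
def projv {ι : Type*} [Fintype ι] (ψ : ι → ℂ) : Matrix ι ι ℂ :=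
  Matrix.vecMulVec ψ (star ψ)

/-- The inner product `⟨ψ|φ⟩`. -/
def ipc {ι : Type*} [Fintype ι] (ψ φ : ι → ℂ) : ℂ :=
  dotProduct (star ψ) φ

-- Square root of a positive semidefinite matrix (junk value `0` otherwise).
open Classical in
def msqrt {ι : Type*} [Fintype ι] [DecidableEq ι] (A : Matrix ι ι ℂ) : Matrix ι ι ℂ :=
  if h : A.PosSemidef then
    (h.1.eigenvectorUnitary : Matrix ι ι ℂ) *
      Matrix.diagonal (((↑) : ℝ → ℂ) ∘ (√·) ∘ h.1.eigenvalues) *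
      (star h.1.eigenvectorUnitary : Matrix ι ι ℂ)
  else 0

/-- Trace norm `‖X‖₁ = Tr √(X†X)`. -/
def traceNorm {ι : Type*} [Fintype ι] [DecidableEq ι] (A : Matrix ι ι ℂ) : ℝ :=
  (msqrt (Aᴴ * A)).trace.re

/-- Uhlmann fidelity `F(ρ,σ) = Tr √(√σ ρ √σ)`. -/
def fid {ι : Type*} [Fintype ι] [DecidableEq ι] (ρ σ : Matrix ι ι ℂ) : ℝ :=
  (msqrt (msqrt σ * ρ * msqrt σ)).trace.re

/-- Operator (spectral) norm of a matrix. -/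
def opNorm {ι : Type*} [Fintype ι] [DecidableEq ι] (A : Matrix ι ι ℂ) : ℝ :=
  ‖Matrix.toEuclideanCLM (𝕜 := ℂ) A‖

/-- Expectation value `⟨ψ|H|ψ⟩` (real part). -/
def exval {ι : Type*} [Fintype ι] (ψ : ι → ℂ) (H : Matrix ι ι ℂ) : ℝ :=
  (ipc ψ (H.mulVec ψ)).re

/-- Pure-state quantum Fisher information `4(⟨H²⟩ - ⟨H⟩²)`. -/
def QFIpure {ι : Type*} [Fintype ι] (ψ : ι → ℂ) (H : Matrix ι ι ℂ) : ℝ :=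
  4 * (exval ψ (H * H) - (exval ψ H) ^ 2)

/-- Density matrix predicate. -/
def IsDensity {ι : Type*} [Fintype ι] [DecidableEq ι] (ρ : Matrix ι ι ℂ) : Prop :=
  ρ.PosSemidef ∧ ρ.trace = 1

/- ### Auxiliary lemmas -/

open MeasureTheory Real Set Finset

lemma aux_int_exp {b : ℝ} (hb : 0 < b) : ∫ x in Ioi (0:ℝ), exp (-(b*x)) = 1/b := by
  have h := integral_exp_neg_mul_rpow one_pos hb
  rw [show (1:ℝ)/1 + 1 = 2 by norm_num, Real.Gamma_two, mul_one] at h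
  simp only [Real.rpow_one, neg_mul] at h
  rw [h, show (-1/1:ℝ) = -1 by norm_num, Real.rpow_neg_one, one_div]

lemma aux_int_exp_integrable {b : ℝ} (hb : 0 < b) :
    IntegrableOn (fun x => exp (-(b*x))) (Ioi (0:ℝ)) := by
  simpa [neg_mul] using exp_neg_integrableOn_Ioi 0 hb

lemma aux_sum4 {M : Type*} [AddCommMonoid M] {n : ℕ} (f : Fin n → Fin n → Fin n → Fin n → M) :
    ∑ m, ∑ k, ∑ i, ∑ j, f m k i j = ∑ i, ∑ j, ∑ m, ∑ k, f m k i j :=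
  calc ∑ m, ∑ k, ∑ i, ∑ j, f m k i j
      = ∑ m, ∑ i, ∑ k, ∑ j, f m k i j :=
        Finset.sum_congr rfl fun _ _ => Finset.sum_comm
    _ = ∑ i, ∑ m, ∑ k, ∑ j, f m k i j := Finset.sum_comm
    _ = ∑ i, ∑ m, ∑ j, ∑ k, f m k i j :=
        Finset.sum_congr rfl fun _ _ => Finset.sum_congr rfl fun _ _ => Finset.sum_comm
    _ = ∑ i, ∑ j, ∑ m, ∑ k, f m k i j :=
        Finset.sum_congr rfl fun _ _ => Finset.sum_comm

lemma aux_sum3 {M : Type*} [AddCommMonoid M] {n : ℕ} (f : Fin n → Fin n → Fin n → M) :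
    ∑ m, ∑ j, ∑ k, f m j k = ∑ j, ∑ k, ∑ m, f m j k := by
  rw [Finset.sum_comm]
  exact Finset.sum_congr rfl fun _ _ => Finset.sum_comm

/-- Bilinear expansion in an orthonormal-type family. -/
lemma aux_expand {n : ℕ} (A : Matrix (Fin n) (Fin n) ℂ) (η : Fin n → Fin n → ℂ)
    (a b : Fin n → ℂ) :
    dotProduct (star (fun m => ∑ j, conj (b j) * η j m))
      (A.mulVec (fun m => ∑ i, a i * η i m))
    = ∑ i, ∑ j, a i * b j * dotProduct (star (η j)) (A.mulVec (η i)) := by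
  simp only [dotProduct, Matrix.mulVec, Pi.star_apply, star_sum, star_mul', star_star,
    RCLike.star_def, Complex.conj_conj, Finset.sum_mul, Finset.mul_sum]
  rw [show (∑ x : Fin n, ∑ x_1 : Fin n, ∑ x_2 : Fin n, ∑ i : Fin n,
      b i * (starRingEnd ℂ) (η i x) * (A x x_1 * (a x_2 * η x_2 x_1)))
    = ∑ x_2, ∑ i, ∑ x, ∑ x_1,
      b i * (starRingEnd ℂ) (η i x) * (A x x_1 * (a x_2 * η x_2 x_1))
    from aux_sum4 _]
  refine Finset.sum_congr rfl fun i _ => Finset.sum_congr rfl fun j _ =>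
    Finset.sum_congr rfl fun m _ => Finset.sum_congr rfl fun k _ => ?_
  ring

/-- Norm of a combination of orthonormal vectors. -/
lemma aux_ortho_norm {n : ℕ} (η : Fin n → Fin n → ℂ)
    (hη : ∀ i j, dotProduct (star (η i)) (η j) = if i = j then 1 else 0)
    (b : Fin n → ℂ) :
    ∑ m, ‖(∑ j, conj (b j) * η j m)‖^2 = ∑ j, ‖b j‖^2 := by
  have key : ∑ m, ((fun m => ∑ j, conj (b j) * η j m) m
        * conj ((fun m => ∑ j, conj (b j) * η j m) m))
      = ∑ j, (b j * conj (b j)) := by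
    simp only [map_sum, map_mul, Complex.conj_conj, Finset.sum_mul, Finset.mul_sum]
    rw [aux_sum3]
    refine Finset.sum_congr rfl fun j _ => ?_
    have : ∀ k, ∑ m, conj (b k) * η k m * (b j * conj (η j m))
        = b j * conj (b k) * dotProduct (star (η j)) (η k) := by
      intro k
      simp only [dotProduct, Pi.star_apply, RCLike.star_def, Finset.mul_sum]
      exact Finset.sum_congr rfl fun m _ => by ring
    rw [Finset.sum_congr rfl fun k _ => this k]
    simp only [hη]
    simp
  have h2 : ((∑ m, ‖(∑ j, conj (b j) * η j m)‖^2 : ℝ) : ℂ) = ((∑ j, ‖b j‖^2 : ℝ) : ℂ) := by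
    push_cast
    simp only [← Complex.mul_conj', ← Complex.mul_conj]
    exact key
  exact_mod_cast h2

/-- The sesquilinear form of a matrix is controlled by its operator norm. -/
lemma aux_hop {n : ℕ} (A : Matrix (Fin n) (Fin n) ℂ) (v w : Fin n → ℂ) :
    ‖dotProduct (star v) (A.mulVec w)‖ ≤
      opNorm A * Real.sqrt (∑ i, ‖v i‖^2) * Real.sqrt (∑ i, ‖w i‖^2) := by
  set E := (WithLp.equiv 2 (Fin n → ℂ)).symm
  have h1 : (inner ℂ (E v) (Matrix.toEuclideanCLM (𝕜:=ℂ) A (E w)) : ℂ)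
      = dotProduct (star v) (A.mulVec w) := by
    rw [EuclideanSpace.inner_eq_star_dotProduct, dotProduct_comm]
    simp [E, Matrix.toLin'_apply, Matrix.ofLp_toEuclideanCLM]
  have h2 := norm_inner_le_norm (𝕜 := ℂ) (E v) (Matrix.toEuclideanCLM (𝕜:=ℂ) A (E w))
  have h3 : ‖Matrix.toEuclideanCLM (𝕜:=ℂ) A (E w)‖ ≤ opNorm A * ‖E w‖ :=
    (Matrix.toEuclideanCLM (𝕜:=ℂ) A).le_opNorm _
  have hv : ‖E v‖ = Real.sqrt (∑ i, ‖v i‖^2) := by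
    rw [EuclideanSpace.norm_eq]; rfl
  have hw : ‖E w‖ = Real.sqrt (∑ i, ‖w i‖^2) := by
    rw [EuclideanSpace.norm_eq]; rfl
  calc ‖dotProduct (star v) (A.mulVec w)‖
      = ‖(inner ℂ (E v) (Matrix.toEuclideanCLM (𝕜:=ℂ) A (E w)) : ℂ)‖ := by rw [h1]
    _ ≤ ‖E v‖ * ‖Matrix.toEuclideanCLM (𝕜:=ℂ) A (E w)‖ := h2
    _ ≤ ‖E v‖ * (opNorm A * ‖E w‖) := mul_le_mul_of_nonneg_left h3 (norm_nonneg _)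
    _ = opNorm A * Real.sqrt (∑ i, ‖v i‖^2) * Real.sqrt (∑ i, ‖w i‖^2) := by
        rw [hv, hw]; ring

/-- From a quadratic bilinear bound to an operator norm bound. -/
lemma aux_bilin_to_opnorm {n : ℕ} (A : Matrix (Fin n) (Fin n) ℂ) (c : ℝ) (hc : 0 ≤ c)
    (hkey : ∀ v w : Fin n → ℂ, ‖dotProduct (star v) (A.mulVec w)‖
      ≤ c/2 * ((∑ i, ‖v i‖^2) + (∑ i, ‖w i‖^2))) :
    opNorm A ≤ c := by
  have key : ∀ v w : Fin n → ℂ, ‖dotProduct (star v) (A.mulVec w)‖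
      ≤ c * Real.sqrt (∑ i, ‖v i‖^2) * Real.sqrt (∑ i, ‖w i‖^2) := by
    intro v w
    have hSv0 : (0:ℝ) ≤ ∑ i, ‖v i‖^2 := Finset.sum_nonneg fun i _ => sq_nonneg _
    have hSw0 : (0:ℝ) ≤ ∑ i, ‖w i‖^2 := Finset.sum_nonneg fun i _ => sq_nonneg _
    rcases hSv0.eq_or_lt with hv0 | hv0
    · have hv : v = 0 := by
        funext i
        have h := (Finset.sum_eq_zero_iff_of_nonneg
          (fun i (_ : i ∈ Finset.univ) => sq_nonneg ‖v i‖)).mp hv0.symm i (Finset.mem_univ i)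
        have : ‖v i‖ = 0 := by nlinarith [norm_nonneg (v i)]
        simpa using this
      rw [hv]
      simp only [star_zero, zero_dotProduct, norm_zero]
      positivity
    rcases hSw0.eq_or_lt with hw0 | hw0
    · have hw : w = 0 := by
        funext i
        have h := (Finset.sum_eq_zero_iff_of_nonneg
          (fun i (_ : i ∈ Finset.univ) => sq_nonneg ‖w i‖)).mp hw0.symm i (Finset.mem_univ i)
        have : ‖w i‖ = 0 := by nlinarith [norm_nonneg (w i)]
        simpa using this
      rw [hw]
      simp only [Matrix.mulVec_zero, dotProduct_zero, norm_zero]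
      positivity
    · set Sv := ∑ i, ‖v i‖^2 with hSv
      set Sw := ∑ i, ‖w i‖^2 with hSw
      have hsv : 0 < Real.sqrt Sv := Real.sqrt_pos.mpr hv0
      have hsw : 0 < Real.sqrt Sw := Real.sqrt_pos.mpr hw0
      set s : ℝ := Real.sqrt (Real.sqrt Sw / Real.sqrt Sv) with hs
      have hspos : 0 < s := Real.sqrt_pos.mpr (div_pos hsw hsv)
      have hs2 : s^2 = Real.sqrt Sw / Real.sqrt Sv := Real.sq_sqrt (div_pos hsw hsv).le
      have h1 := hkey ((s:ℂ) • v) (((s⁻¹:ℝ):ℂ) • w)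
      have hL : dotProduct (star ((s:ℂ) • v)) (A.mulVec (((s⁻¹:ℝ):ℂ) • w))
          = dotProduct (star v) (A.mulVec w) := by
        rw [star_smul, Matrix.mulVec_smul, smul_dotProduct, dotProduct_smul]
        rw [smul_smul]
        have : star ((s:ℂ)) * ((s⁻¹:ℝ):ℂ) = 1 := by
          rw [RCLike.star_def, Complex.conj_ofReal, ← Complex.ofReal_mul,
            mul_inv_cancel₀ (ne_of_gt hspos)]
          norm_num
        rw [this, one_smul]
      have hv' : ∑ i, ‖((s:ℂ) • v) i‖^2 = s^2 * Sv := by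
        simp only [Pi.smul_apply, smul_eq_mul, norm_mul, Complex.norm_real, Real.norm_eq_abs,
          abs_of_pos hspos, mul_pow, ← Finset.mul_sum, hSv]
      have hw' : ∑ i, ‖(((s⁻¹:ℝ):ℂ) • w) i‖^2 = (s⁻¹)^2 * Sw := by
        simp only [Pi.smul_apply, smul_eq_mul, norm_mul, Complex.norm_real, Real.norm_eq_abs,
          abs_of_pos (inv_pos.mpr hspos), mul_pow, ← Finset.mul_sum, hSw]
      rw [hL, hv', hw'] at h1
      have hval : s^2 * Sv + (s⁻¹)^2 * Sw = 2 * (Real.sqrt Sv * Real.sqrt Sw) := by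
        have hinv : (s⁻¹)^2 = Real.sqrt Sv / Real.sqrt Sw := by
          rw [inv_pow, hs2]
          field_simp
        rw [hs2, hinv]
        have hv2 : Real.sqrt Sv * Real.sqrt Sv = Sv := Real.mul_self_sqrt hSv0
        have hw2 : Real.sqrt Sw * Real.sqrt Sw = Sw := Real.mul_self_sqrt hSw0
        field_simp
        nlinarith [hv2, hw2]
      calc ‖dotProduct (star v) (A.mulVec w)‖
          ≤ c/2 * (s^2 * Sv + (s⁻¹)^2 * Sw) := h1
        _ = c * Real.sqrt Sv * Real.sqrt Sw := by rw [hval]; ring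
  show ‖Matrix.toEuclideanCLM (𝕜 := ℂ) A‖ ≤ c
  apply ContinuousLinearMap.opNorm_le_bound _ hc
  intro y
  set T := Matrix.toEuclideanCLM (𝕜 := ℂ) A with hT
  have hinner : (inner ℂ (T y) (T y) : ℂ)
      = dotProduct (star ((WithLp.equiv 2 (Fin n → ℂ)) (T y)))
        (A.mulVec ((WithLp.equiv 2 (Fin n → ℂ)) y)) := by
    rw [EuclideanSpace.inner_eq_star_dotProduct, dotProduct_comm]
    simp [hT, Matrix.ofLp_toEuclideanCLM, Matrix.toLin'_apply]
  have hnorm2 : ‖(inner ℂ (T y) (T y) : ℂ)‖ = ‖T y‖^2 := by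
    rw [inner_self_eq_norm_sq_to_K]
    simp [norm_pow, Complex.norm_real, abs_norm]
  have h2 := key ((WithLp.equiv 2 (Fin n → ℂ)) (T y)) ((WithLp.equiv 2 (Fin n → ℂ)) y)
  have hA : Real.sqrt (∑ i, ‖((WithLp.equiv 2 (Fin n → ℂ)) (T y)) i‖^2) = ‖T y‖ :=
    (EuclideanSpace.norm_eq (T y)).symm
  have hB : Real.sqrt (∑ i, ‖((WithLp.equiv 2 (Fin n → ℂ)) y) i‖^2) = ‖y‖ :=
    (EuclideanSpace.norm_eq y).symm
  rw [hA, hB, ← hinner, hnorm2] at h2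
  rcases (norm_nonneg (T y)).eq_or_lt with h0 | h0
  · rw [← h0]
    positivity
  · nlinarith [h2, h0, norm_nonneg y]

/-- The core quadratic estimate for the environmental Hamiltonian. -/
lemma aux_key2 {n : ℕ} (μ : Fin n → ℝ) (hμ : ∀ i, 0 < μ i)
    (η : Fin n → Fin n → ℂ)
    (hη : ∀ i j, dotProduct (star (η i)) (η j) = if i = j then 1 else 0)
    (H : Matrix (Fin n) (Fin n) ℂ) (v w : Fin n → ℂ) :
    ‖dotProduct (star v) ((Matrix.of fun i j : Fin n =>
        ((-(2 * Real.sqrt (μ i * μ j) / (μ i + μ j)) : ℝ) : ℂ)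
          * dotProduct (star (η j)) (H.mulVec (η i))).mulVec w)‖
      ≤ opNorm H / 2 * ((∑ i, ‖v i‖^2) + (∑ i, ‖w i‖^2)) := by
  set c := opNorm H with hcdef
  have hc : 0 ≤ c := norm_nonneg _
  set M : Fin n → Fin n → ℂ :=
    fun i j => dotProduct (star (η j)) (H.mulVec (η i)) with hM
  set G : Fin n → Fin n → ℝ → ℂ := fun i j t =>
    ((2 * Real.sqrt (μ i) * Real.sqrt (μ j) * Real.exp (-((μ i + μ j) * t)) : ℝ) : ℂ)
      * (conj (v i) * (M i j * w j)) with hG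
  have hGint : ∀ i j, IntegrableOn (G i j) (Ioi (0:ℝ)) := by
    intro i j
    exact (((aux_int_exp_integrable (show (0:ℝ) < μ i + μ j by
      have := hμ i; have := hμ j; linarith)).const_mul
        (2 * Real.sqrt (μ i) * Real.sqrt (μ j))).ofReal).mul_const _
  have hrep : ∀ i j, conj (v i)
      * ((((-(2 * Real.sqrt (μ i * μ j) / (μ i + μ j)) : ℝ) : ℂ) * M i j) * w j)
      = -∫ t in Ioi (0:ℝ), G i j t := by
    intro i j
    have hab : (0:ℝ) < μ i + μ j := by have := hμ i; have := hμ j; linarith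
    have h1 : (2 * Real.sqrt (μ i * μ j) / (μ i + μ j) : ℝ)
        = ∫ t in Ioi (0:ℝ),
            2 * Real.sqrt (μ i) * Real.sqrt (μ j) * Real.exp (-((μ i + μ j) * t)) := by
      rw [MeasureTheory.integral_const_mul, aux_int_exp hab, Real.sqrt_mul (hμ i).le]
      field_simp
    have h2 : ((2 * Real.sqrt (μ i * μ j) / (μ i + μ j) : ℝ) : ℂ)
        = ∫ t in Ioi (0:ℝ),
            ((2 * Real.sqrt (μ i) * Real.sqrt (μ j) * Real.exp (-((μ i + μ j) * t)) : ℝ) : ℂ) := by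
      rw [h1]
      exact (integral_ofReal (𝕜 := ℂ)).symm
    calc conj (v i) * ((((-(2 * Real.sqrt (μ i * μ j) / (μ i + μ j)) : ℝ) : ℂ) * M i j) * w j)
        = -(((2 * Real.sqrt (μ i * μ j) / (μ i + μ j) : ℝ) : ℂ)
            * (conj (v i) * (M i j * w j))) := by push_cast; ring
      _ = -∫ t in Ioi (0:ℝ), G i j t := by
          rw [h2, ← MeasureTheory.integral_mul_const]
  have hS : dotProduct (star v) ((Matrix.of fun i j : Fin n =>
        ((-(2 * Real.sqrt (μ i * μ j) / (μ i + μ j)) : ℝ) : ℂ) * M i j).mulVec w)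
      = -∫ t in Ioi (0:ℝ), ∑ i, ∑ j, G i j t := by
    have e0 : dotProduct (star v) ((Matrix.of fun i j : Fin n =>
          ((-(2 * Real.sqrt (μ i * μ j) / (μ i + μ j)) : ℝ) : ℂ) * M i j).mulVec w)
        = ∑ i, ∑ j, conj (v i)
            * ((((-(2 * Real.sqrt (μ i * μ j) / (μ i + μ j)) : ℝ) : ℂ) * M i j) * w j) := by
      simp only [dotProduct, Matrix.mulVec, Matrix.of_apply, Pi.star_apply,
        RCLike.star_def, Finset.mul_sum]
    rw [e0, Finset.sum_congr rfl fun i _ => Finset.sum_congr rfl fun j _ => hrep i j]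
    simp only [Finset.sum_neg_distrib]
    congr 1
    rw [Finset.sum_congr rfl fun i (_ : i ∈ Finset.univ) =>
      (MeasureTheory.integral_finset_sum Finset.univ (fun j _ => hGint i j)).symm]
    exact (MeasureTheory.integral_finset_sum Finset.univ
      (fun i _ => MeasureTheory.integrable_finset_sum Finset.univ fun j _ => hGint i j)).symm
  set B : ℝ → ℝ := fun t =>
    ∑ i, (c * (‖v i‖^2 + ‖w i‖^2)) * (μ i * Real.exp (-(2 * μ i * t))) with hB
  have hBint : IntegrableOn B (Ioi (0:ℝ)) :=
    MeasureTheory.integrable_finset_sum Finset.univ fun i _ =>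
      (((aux_int_exp_integrable (show (0:ℝ) < 2 * μ i by have := hμ i; linarith)).const_mul
        (μ i)).const_mul _)
  have hFB : ∀ t : ℝ, ‖∑ i, ∑ j, G i j t‖ ≤ B t := by
    intro t
    set s : Fin n → ℝ := fun i => Real.sqrt (μ i) * Real.exp (-(μ i * t)) with hsdef
    have hs_pos : ∀ i, 0 < s i := fun i => by
      have := hμ i
      positivity
    set aa : Fin n → ℂ := fun i => conj (v i) * ((s i : ℝ) : ℂ) with haadef
    set bb : Fin n → ℂ := fun j => w j * ((s j : ℝ) : ℂ) with hbbdef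
    have hGab : ∀ i j, G i j t = 2 * (aa i * bb j * M i j) := by
      intro i j
      simp only [hG, haadef, hbbdef, hsdef]
      rw [show Real.exp (-((μ i + μ j) * t))
          = Real.exp (-(μ i * t)) * Real.exp (-(μ j * t)) by
        rw [← Real.exp_add]; ring_nf]
      push_cast
      ring
    have hFeq : ∑ i, ∑ j, G i j t
        = 2 * dotProduct (star (fun m => ∑ j, conj (bb j) * η j m))
            (H.mulVec (fun m => ∑ i, aa i * η i m)) := by
      rw [aux_expand H η aa bb]
      rw [Finset.mul_sum]
      refine Finset.sum_congr rfl fun i _ => ?_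
      rw [Finset.mul_sum]
      exact Finset.sum_congr rfl fun j _ => hGab i j
    have hop1 := aux_hop H (fun m => ∑ j, conj (bb j) * η j m) (fun m => ∑ i, aa i * η i m)
    have hnb : ∑ m, ‖(fun m => ∑ j, conj (bb j) * η j m) m‖^2 = ∑ j, ‖bb j‖^2 :=
      aux_ortho_norm η hη bb
    have hna : ∑ m, ‖(fun m => ∑ i, aa i * η i m) m‖^2 = ∑ i, ‖aa i‖^2 := by
      have h := aux_ortho_norm η hη (fun i => conj (aa i))
      simp only [Complex.conj_conj, RCLike.norm_conj] at h
      exact h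
    rw [hnb, hna] at hop1
    have hXnn : (0:ℝ) ≤ ∑ j, ‖bb j‖^2 := Finset.sum_nonneg fun _ _ => sq_nonneg _
    have hYnn : (0:ℝ) ≤ ∑ i, ‖aa i‖^2 := Finset.sum_nonneg fun _ _ => sq_nonneg _
    have hgm : 2 * (Real.sqrt (∑ j, ‖bb j‖^2) * Real.sqrt (∑ i, ‖aa i‖^2))
        ≤ (∑ j, ‖bb j‖^2) + (∑ i, ‖aa i‖^2) := by
      have h := two_mul_le_add_sq (Real.sqrt (∑ j, ‖bb j‖^2)) (Real.sqrt (∑ i, ‖aa i‖^2))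
      rwa [Real.sq_sqrt hXnn, Real.sq_sqrt hYnn, mul_assoc] at h
    have hsq : ∀ i, (s i)^2 = μ i * Real.exp (-(2 * μ i * t)) := by
      intro i
      simp only [hsdef]
      rw [mul_pow, Real.sq_sqrt (hμ i).le, sq, ← Real.exp_add]
      rw [show -(μ i * t) + -(μ i * t) = -(2 * μ i * t) by ring]
    have haan : ∀ i, ‖aa i‖^2 = ‖v i‖^2 * (μ i * Real.exp (-(2 * μ i * t))) := by
      intro i
      have h1 : ‖aa i‖ = ‖v i‖ * s i := by
        simp only [haadef, norm_mul, RCLike.norm_conj, Complex.norm_real, Real.norm_eq_abs,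
          abs_of_pos (hs_pos i)]
      rw [h1, mul_pow, hsq i]
    have hbbn : ∀ j, ‖bb j‖^2 = ‖w j‖^2 * (μ j * Real.exp (-(2 * μ j * t))) := by
      intro j
      have h1 : ‖bb j‖ = ‖w j‖ * s j := by
        simp only [hbbdef, norm_mul, Complex.norm_real, Real.norm_eq_abs,
          abs_of_pos (hs_pos j)]
      rw [h1, mul_pow, hsq j]
    have hBeq : B t = c * ((∑ j, ‖bb j‖^2) + (∑ i, ‖aa i‖^2)) := by
      simp only [hB, Finset.sum_congr rfl fun i (_ : i ∈ Finset.univ) => haan i,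
        Finset.sum_congr rfl fun j (_ : j ∈ Finset.univ) => hbbn j]
      rw [← Finset.sum_add_distrib, Finset.mul_sum]
      exact Finset.sum_congr rfl fun i _ => by ring
    calc ‖∑ i, ∑ j, G i j t‖
        = 2 * ‖dotProduct (star (fun m => ∑ j, conj (bb j) * η j m))
            (H.mulVec (fun m => ∑ i, aa i * η i m))‖ := by
          rw [hFeq, norm_mul]; norm_num
      _ ≤ 2 * (c * Real.sqrt (∑ j, ‖bb j‖^2) * Real.sqrt (∑ i, ‖aa i‖^2)) := by
          exact mul_le_mul_of_nonneg_left hop1 (by norm_num)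
      _ = c * (2 * (Real.sqrt (∑ j, ‖bb j‖^2) * Real.sqrt (∑ i, ‖aa i‖^2))) := by ring
      _ ≤ c * ((∑ j, ‖bb j‖^2) + (∑ i, ‖aa i‖^2)) := mul_le_mul_of_nonneg_left hgm hc
      _ = B t := hBeq.symm
  have hBval : ∫ t in Ioi (0:ℝ), B t = c/2 * ((∑ i, ‖v i‖^2) + (∑ i, ‖w i‖^2)) := by
    rw [MeasureTheory.integral_finset_sum Finset.univ (fun i _ =>
      (((aux_int_exp_integrable (show (0:ℝ) < 2 * μ i by have := hμ i; linarith)).const_mul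
        (μ i)).const_mul _))]
    have hterm : ∀ i, ∫ t in Ioi (0:ℝ),
        (c * (‖v i‖^2 + ‖w i‖^2)) * (μ i * Real.exp (-(2 * μ i * t)))
        = (c * (‖v i‖^2 + ‖w i‖^2)) * (1/2) := by
      intro i
      rw [MeasureTheory.integral_const_mul, MeasureTheory.integral_const_mul,
        aux_int_exp (show (0:ℝ) < 2 * μ i by have := hμ i; linarith)]
      rw [show μ i * (1 / (2 * μ i)) = 1/2 from by
        rw [mul_one_div, div_eq_div_iff (by have := hμ i; linarith) two_ne_zero]; ring]
    rw [Finset.sum_congr rfl fun i _ => hterm i]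
    rw [show ∑ i, (c * (‖v i‖^2 + ‖w i‖^2)) * (1/2)
        = c/2 * ∑ i, (‖v i‖^2 + ‖w i‖^2) by
      rw [Finset.mul_sum]; exact Finset.sum_congr rfl fun i _ => by ring]
    rw [Finset.sum_add_distrib]
  calc ‖dotProduct (star v) ((Matrix.of fun i j : Fin n =>
        ((-(2 * Real.sqrt (μ i * μ j) / (μ i + μ j)) : ℝ) : ℂ) * M i j).mulVec w)‖
      = ‖∫ t in Ioi (0:ℝ), ∑ i, ∑ j, G i j t‖ := by rw [hS, norm_neg]
    _ ≤ ∫ t in Ioi (0:ℝ), B t :=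
        MeasureTheory.norm_integral_le_of_norm_le hBint
          (Filter.Eventually.of_forall hFB)
    _ = c/2 * ((∑ i, ‖v i‖^2) + (∑ i, ‖w i‖^2)) := hBval

/-- the optimal environmental Hamiltonian, with entries
`h_{ij} = −(2√(μᵢμⱼ)/(μᵢ+μⱼ)) ⟨ηⱼ|H|ηᵢ⟩` built from the eigendecomposition
`σ = Σ μᵢ|ηᵢ⟩⟨ηᵢ|` of a full-rank density matrix, satisfies `‖h‖ ≤ ‖H‖`. -/
theorem env_hamiltonian_norm_bound {n : ℕ} (μ : Fin n → ℝ) (hμ : ∀ i, 0 < μ i)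
    (hsum : ∑ i, μ i = 1)
    (η : Fin n → Fin n → ℂ) (hη : ∀ i j, ipc (η i) (η j) = if i = j then 1 else 0)
    (H : Matrix (Fin n) (Fin n) ℂ) (hH : H.IsHermitian) :
    opNorm (Matrix.of fun i j : Fin n =>
        ((-(2 * Real.sqrt (μ i * μ j) / (μ i + μ j)) : ℝ) : ℂ) * ipc (η j) (H.mulVec (η i)))
      ≤ opNorm H := by
  have hη' : ∀ i j, dotProduct (star (η i)) (η j) = if i = j then 1 else 0 := hη
  exact aux_bilin_to_opnorm _ (opNorm H) (norm_nonneg _)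
    (fun v w => aux_key2 μ hμ η hη' H v w)
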